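/- Let 0 < p < 1, and let k = k(n) = 4⌈ln n / ln(1/p)⌉. The probability that the uniform random graph G(n,m) with m = p·C(n,2) edges contains a set of k vertices spanning at least C(k,2) − k/2 edges is at most (en/k)^k · (e(k−1))^{k/2} · p^{C(k,2) − k/2}, and this bound tends to 0 as n → ∞. -/

import Mathlib

open Finset Filter

/-- The edges of the complete graph `K_n`: non-diagonal elements of `Sym2 (Fin n)`. -/
def knBoard (n : ℕ) : Finset (Sym2 (Fin n)) :=
  Finset.univ.filter fun e : Sym2 (Fin n) => ¬ e.IsDiag

lemma aux_pow_le_exp_factorial (n : ℕ) : (n:ℝ)^n ≤ Real.exp 1 ^ n * n.factorial := by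
  have h1 : (n:ℝ)^n / n.factorial ≤ Real.exp n := by
    calc (n:ℝ)^n / n.factorial ≤ ∑ i ∈ Finset.range (n+1), (n:ℝ)^i / i.factorial := by
          exact Finset.single_le_sum (f := fun i => (n:ℝ)^i / i.factorial)
            (fun i _ => by positivity) (Finset.self_mem_range_succ n)
      _ ≤ Real.exp n := Real.sum_le_exp_of_nonneg (by positivity) _
  have h2 : (0:ℝ) < n.factorial := by exact_mod_cast n.factorial_pos
  rw [div_le_iff₀ h2] at h1
  calc (n:ℝ)^n ≤ Real.exp n * n.factorial := h1
    _ = Real.exp 1 ^ n * n.factorial := by rw [Real.exp_one_pow]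

-- C(n,k) ≤ (e n / k)^k

lemma aux_choose_le (n k : ℕ) : (n.choose k : ℝ) ≤ (Real.exp 1 * n / k)^k := by
  rcases Nat.eq_zero_or_pos k with rfl | hk
  · simp
  have hkR : (0:ℝ) < k := by exact_mod_cast hk
  have hfac : (0:ℝ) < k.factorial := by exact_mod_cast k.factorial_pos
  calc (n.choose k : ℝ) ≤ (n:ℝ)^k / k.factorial := by
        exact_mod_cast Nat.choose_le_pow_div k n
    _ ≤ (Real.exp 1 * n / k)^k := by
        rw [div_pow, mul_pow, div_le_div_iff₀ hfac (by positivity)]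
        calc (n:ℝ)^k * (k:ℝ)^k ≤ (n:ℝ)^k * (Real.exp 1 ^ k * k.factorial) := by
              exact mul_le_mul_of_nonneg_left (aux_pow_le_exp_factorial k) (by positivity)
          _ = Real.exp 1 ^ k * (n:ℝ)^k * k.factorial := by ring

lemma aux_descFactorial (q : ℕ) {m N : ℕ} (h : m ≤ N) :
    m.descFactorial q * N^q ≤ N.descFactorial q * m^q := by
  induction q with
  | zero => simp
  | succ q ih =>
    rw [Nat.descFactorial_succ, Nat.descFactorial_succ, pow_succ, pow_succ]
    calc (m - q) * m.descFactorial q * (N^q * N)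
        = ((m - q) * N) * (m.descFactorial q * N^q) := by ring
      _ ≤ ((N - q) * m) * (N.descFactorial q * m^q) := by
          apply Nat.mul_le_mul _ ih
          calc (m - q) * N = m * N - q * N := by rw [Nat.sub_mul]
            _ ≤ N * m - q * m := by
                rw [Nat.mul_comm m N]
                exact Nat.sub_le_sub_left (Nat.mul_le_mul_left q h) _
            _ = (N - q) * m := by rw [Nat.sub_mul]
      _ = (N - q) * N.descFactorial q * (m^q * m) := by ring

lemma aux_choose_ratio {q m N : ℕ} (hqm : q ≤ m) (hmN : m ≤ N) :
    ((N - q).choose (m - q) : ℝ) / (N.choose m) ≤ ((m:ℝ)/N)^q := by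
  have hCm : (0:ℝ) < N.choose m := by exact_mod_cast Nat.choose_pos hmN
  rcases Nat.eq_zero_or_pos q with rfl | hq
  · simp only [Nat.sub_zero, pow_zero]
    rw [div_le_one hCm]
  have hN : 0 < N := lt_of_lt_of_le (lt_of_lt_of_le hq hqm) hmN
  have hNR : (0:ℝ) < N := by exact_mod_cast hN
  have hCq : (0:ℝ) < N.choose q := by exact_mod_cast Nat.choose_pos (hqm.trans hmN)
  have key : (N.choose m : ℝ) * m.choose q = N.choose q * (N - q).choose (m - q) := by
    exact_mod_cast congrArg Nat.cast (Nat.choose_mul (n := N) hqm)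
  have h2 : (m.choose q : ℝ) * N^q ≤ N.choose q * m^q := by
    have h3 := aux_descFactorial q hmN
    rw [Nat.descFactorial_eq_factorial_mul_choose, Nat.descFactorial_eq_factorial_mul_choose] at h3
    have hfac : 0 < q.factorial := q.factorial_pos
    have h4 : q.factorial * (m.choose q * N^q) ≤ q.factorial * (N.choose q * m^q) := by
      calc q.factorial * (m.choose q * N^q) = q.factorial * m.choose q * N^q := by ring
        _ ≤ q.factorial * N.choose q * m^q := h3
        _ = q.factorial * (N.choose q * m^q) := by ring
    exact_mod_cast Nat.le_of_mul_le_mul_left h4 hfac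
  have hX : ((N - q).choose (m - q) : ℝ) = N.choose m * m.choose q / N.choose q := by
    field_simp
    linarith [key]
  have hmain : ((N - q).choose (m - q) : ℝ) * N^q ≤ N.choose m * m^q := by
    rw [hX, div_mul_eq_mul_div, div_le_iff₀ hCq]
    calc (N.choose m : ℝ) * m.choose q * N^q = N.choose m * (m.choose q * N^q) := by ring
      _ ≤ N.choose m * (N.choose q * m^q) := mul_le_mul_of_nonneg_left h2 hCm.le
      _ = N.choose m * m^q * N.choose q := by ring
  rw [div_pow, div_le_div_iff₀ hCm (by positivity)]
  linarith [hmain]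

-- counting supersets of S of size mm inside s

lemma aux_count_supersets {α : Type*} [DecidableEq α] (s S : Finset α) (mm : ℕ) (hS : S ⊆ s) :
    ((s.powersetCard mm).filter (fun E => S ⊆ E)).card
      ≤ (s.card - S.card).choose (mm - S.card) := by
  have := Finset.card_powersetCard (mm - S.card) (s \ S)
  rw [Finset.card_sdiff_of_subset hS] at this
  rw [← this]
  apply Finset.card_le_card_of_injOn (fun E => E \ S)
  · intro E hE
    simp only [Finset.mem_coe, Finset.mem_filter, Finset.mem_powersetCard] at hE ⊢
    obtain ⟨⟨hEs, hEc⟩, hSE⟩ := hE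
    exact ⟨Finset.sdiff_subset_sdiff hEs (le_refl S), by rw [Finset.card_sdiff_of_subset hSE, hEc]⟩
  · intro E1 h1 E2 h2 h
    simp only [Finset.coe_filter, Set.mem_setOf_eq, Finset.mem_powersetCard] at h1 h2
    have e1 : E1 = E1 \ S ∪ S := (Finset.sdiff_union_of_subset h1.2).symm
    have e2 : E2 = E2 \ S ∪ S := (Finset.sdiff_union_of_subset h2.2).symm
    rw [e1, e2]; exact congrArg (· ∪ S) h

lemma aux_board_card (n : ℕ) : (knBoard n).card = n.choose 2 := by
  have : (knBoard n).card = Fintype.card {e : Sym2 (Fin n) // ¬ e.IsDiag} := by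
    rw [Fintype.card_subtype]; rfl
  rw [this, Sym2.card_subtype_not_diag, Fintype.card_fin]

lemma aux_inner_card {n : ℕ} (K : Finset (Fin n)) :
    ((knBoard n).filter (fun e => e ∈ K.sym2)).card = K.card.choose 2 := by
  have heq : (knBoard n).filter (fun e => e ∈ K.sym2)
      = K.offDiag.image Sym2.mk.uncurry := by
    rw [← Sym2.filter_image_mk_not_isDiag, ← Finset.sym2_eq_image]
    ext e
    simp only [knBoard, Finset.mem_filter, Finset.mem_univ, true_and]
    tauto
  rw [heq, Sym2.card_image_offDiag]

lemma aux_union_count (n kk mm q : ℕ) :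
    (((knBoard n).powersetCard mm).filter
        (fun E => ∃ K : Finset (Fin n), K.card = kk ∧ q ≤ (E.filter fun e => e ∈ K.sym2).card)).card
      ≤ n.choose kk * (kk.choose 2).choose q * ((knBoard n).card - q).choose (mm - q) := by
  classical
  set board := knBoard n
  set pC := board.powersetCard mm
  have hsub : pC.filter
        (fun E => ∃ K : Finset (Fin n), K.card = kk ∧ q ≤ (E.filter fun e => e ∈ K.sym2).card)
      ⊆ (Finset.univ.powersetCard kk).biUnion (fun K =>
          ((board.filter (fun e => e ∈ K.sym2)).powersetCard q).biUnion (fun S =>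
            pC.filter (fun E => S ⊆ E))) := by
    intro E hE
    simp only [Finset.mem_filter] at hE
    obtain ⟨hEpc, K, hKcard, hKq⟩ := hE
    obtain ⟨S, hSsub, hScard⟩ := Finset.exists_subset_card_eq hKq
    simp only [Finset.mem_biUnion]
    refine ⟨K, ?_, S, ?_, ?_⟩
    · simp [Finset.mem_powersetCard, hKcard]
    · simp only [Finset.mem_powersetCard]
      refine ⟨?_, hScard⟩
      intro e he
      have := hSsub he
      simp only [Finset.mem_filter] at this ⊢
      have hEb : E ⊆ board := (Finset.mem_powersetCard.mp hEpc).1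
      exact ⟨hEb this.1, this.2⟩
    · simp only [Finset.mem_filter]
      exact ⟨hEpc, fun e he => (Finset.mem_filter.mp (hSsub he)).1⟩
  calc _ ≤ _ := Finset.card_le_card hsub
    _ ≤ ∑ K ∈ Finset.univ.powersetCard kk,
          (((board.filter (fun e => e ∈ K.sym2)).powersetCard q).biUnion (fun S =>
            pC.filter (fun E => S ⊆ E))).card := Finset.card_biUnion_le
    _ ≤ ∑ K ∈ Finset.univ.powersetCard kk,
          ∑ S ∈ (board.filter (fun e => e ∈ K.sym2)).powersetCard q,
            (pC.filter (fun E => S ⊆ E)).card :=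
        Finset.sum_le_sum (fun K _ => Finset.card_biUnion_le)
    _ ≤ ∑ K ∈ Finset.univ.powersetCard kk,
          ∑ S ∈ (board.filter (fun e => e ∈ K.sym2)).powersetCard q,
            (board.card - q).choose (mm - q) := by
        apply Finset.sum_le_sum
        intro K _
        apply Finset.sum_le_sum
        intro S hS
        rw [Finset.mem_powersetCard] at hS
        have hSb : S ⊆ board := hS.1.trans (Finset.filter_subset _ _)
        have := aux_count_supersets board S mm hSb
        rw [hS.2] at this
        exact this
    _ = n.choose kk * (kk.choose 2).choose q * (board.card - q).choose (mm - q) := by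
        have h1 : (Finset.univ.powersetCard kk : Finset (Finset (Fin n))).card = n.choose kk := by
          rw [Finset.card_powersetCard, Finset.card_univ, Fintype.card_fin]
        have h2 : ∀ K ∈ (Finset.univ.powersetCard kk : Finset (Finset (Fin n))),
            ∑ _S ∈ (board.filter (fun e => e ∈ K.sym2)).powersetCard q,
              (board.card - q).choose (mm - q)
            = (kk.choose 2).choose q * ((board.card - q).choose (mm - q)) := by
          intro K hK
          rw [Finset.mem_powersetCard] at hK
          rw [Finset.sum_const, Finset.card_powersetCard, aux_inner_card, hK.2, smul_eq_mul]
        rw [Finset.sum_congr rfl h2, Finset.sum_const, h1, smul_eq_mul]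
        ring

set_option maxHeartbeats 2000000 in
/-- for `0 < p < 1` and `k = k(n) = 4⌈ln n / ln(1/p)⌉`, the probability that the
uniform random graph `G(n,m)` with `m = p·C(n,2)` edges contains a set of `k` vertices spanning
at least `C(k,2) - k/2` edges is at most `(en/k)^k (e(k-1))^{k/2} p^{C(k,2)-k/2}`, and this
bound tends to `0` as `n → ∞`. -/
theorem stmt_3 (p : ℝ) (hp0 : 0 < p) (hp1 : p < 1)
    (k m : ℕ → ℕ)
    (hk : ∀ n, k n = 4 * ⌈Real.log n / Real.log (1 / p)⌉₊)
    (hm : ∀ n, (m n : ℝ) ≤ p * (n.choose 2 : ℝ)) :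
    (∀ n : ℕ,
      (Nat.card {E : Finset (Sym2 (Fin n)) //
          E ∈ (knBoard n).powersetCard (m n) ∧
          ∃ K : Finset (Fin n), K.card = k n ∧
            (k n).choose 2 - k n / 2 ≤ (E.filter fun e => e ∈ K.sym2).card} : ℝ) /
        ((knBoard n).powersetCard (m n)).card
      ≤ (Real.exp 1 * n / k n) ^ (k n) * (Real.exp 1 * ((k n : ℝ) - 1)) ^ (k n / 2) *
          p ^ ((k n).choose 2 - k n / 2)) ∧
    Filter.Tendsto (fun n : ℕ =>
        (Real.exp 1 * n / k n) ^ (k n) * (Real.exp 1 * ((k n : ℝ) - 1)) ^ (k n / 2) *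
          p ^ ((k n).choose 2 - k n / 2))
      Filter.atTop (nhds 0) := by
  constructor
  · intro n
    classical
    have hk4 : k n = 4 * ⌈Real.log n / Real.log (1 / p)⌉₊ := hk n
    set t := ⌈Real.log n / Real.log (1 / p)⌉₊ with ht
    set kk := k n with hkk
    set N := n.choose 2 with hN
    set q := kk.choose 2 - kk/2 with hq
    set board := knBoard n with hboardd
    set pC := board.powersetCard (m n) with hpC
    have hboard : board.card = N := aux_board_card n
    have hmN : m n ≤ N := by
      have h := hm n
      have h2 : (m n : ℝ) ≤ (N:ℝ) := by nlinarith [Nat.cast_nonneg (α := ℝ) N]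
      exact_mod_cast h2
    have hD : (pC.card : ℝ) = (N.choose (m n) : ℝ) := by
      rw [hpC, Finset.card_powersetCard, hboard]
    have hDpos : (0:ℝ) < pC.card := by
      rw [hD]; exact_mod_cast Nat.choose_pos hmN
    -- numerator as a filter card
    set P : Finset (Sym2 (Fin n)) → Prop := fun E =>
      ∃ K : Finset (Fin n), K.card = kk ∧ q ≤ (E.filter fun e => e ∈ K.sym2).card with hP
    have hnum : (Nat.card {E : Finset (Sym2 (Fin n)) // E ∈ pC ∧ P E} : ℕ)
        = (pC.filter P).card := by
      rw [Nat.card_eq_fintype_card, Fintype.card_subtype]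
      congr 1
      ext E
      simp [Finset.mem_filter]
    rw [hnum]
    -- trivial bound helper
    have htriv : ((pC.filter P).card : ℝ) ≤ pC.card := by
      exact_mod_cast Finset.card_le_card (Finset.filter_subset _ _)
    rcases Nat.eq_zero_or_pos t with ht0 | htpos
    · -- kk = 0 case
      have hkk0 : kk = 0 := by omega
      have hq0 : q = 0 := by rw [hq, hkk0]; rfl
      simp only [hkk0, hq0, pow_zero, Nat.zero_div, mul_one, one_mul]
      rw [div_le_one hDpos]
      exact htriv
    -- main case : t ≥ 1
    obtain ⟨s, hts⟩ : ∃ s, t = s + 1 := ⟨t - 1, by omega⟩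
    have hkk4 : kk = 4*s + 4 := by omega
    have hc2 : kk.choose 2 = (2*s+2)*(4*s+3) := by
      rw [Nat.choose_two_right, hkk4]
      have h1 : (4*s+4) * (4*s+4-1) = 2 * ((2*s+2)*(4*s+3)) := by
        have h0 : 4*s+4-1 = 4*s+3 := by omega
        rw [h0]; ring
      rw [h1, Nat.mul_div_cancel_left _ (by norm_num)]
    have hhalf : kk/2 = 2*s+2 := by omega
    have hhalfle : kk/2 ≤ kk.choose 2 := by
      rw [hhalf, hc2]; nlinarith
    have hqval : q = kk.choose 2 - kk/2 := hq
    have hqpos : 0 < q := by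
      rw [hqval, hc2, hhalf]
      have : (2*s+2)*(4*s+3) ≥ (2*s+2)*3 := Nat.mul_le_mul_left _ (by omega)
      have h2 : (2*s+2)*3 = 6*s+6 := by ring
      omega
    -- RHS nonnegativity pieces
    have hkkR : (4:ℝ) ≤ (kk:ℝ) := by rw [hkk4]; push_cast; linarith
    have hB0 : (0:ℝ) ≤ Real.exp 1 * ((kk:ℝ) - 1) := by
      have := Real.exp_pos 1; nlinarith
    have hRHS0 : (0:ℝ) ≤ (Real.exp 1 * n / kk) ^ kk * (Real.exp 1 * ((kk : ℝ) - 1)) ^ (kk / 2) *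
        p ^ q := by
      have h1 : (0:ℝ) ≤ (Real.exp 1 * n / kk) := by positivity
      positivity
    rcases Nat.eq_zero_or_pos (pC.filter P).card with hnum0 | hnumpos
    · rw [hnum0]
      simp only [Nat.cast_zero, zero_div]
      exact hRHS0
    -- get q ≤ m n
    obtain ⟨E, hE⟩ := Finset.card_pos.mp hnumpos
    have hqm : q ≤ m n := by
      rw [Finset.mem_filter] at hE
      obtain ⟨hEpc, K, hKc, hKq⟩ := hE
      rw [Finset.mem_powersetCard] at hEpc
      calc q ≤ (E.filter fun e => e ∈ K.sym2).card := hKq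
        _ ≤ E.card := Finset.card_le_card (Finset.filter_subset _ _)
        _ = m n := hEpc.2
    have hNpos : 0 < N := lt_of_lt_of_le (lt_of_lt_of_le hqpos hqm) hmN
    have hNR : (0:ℝ) < N := by exact_mod_cast hNpos
    have hmnp : (m n : ℝ)/N ≤ p := by
      rw [div_le_iff₀ hNR]; exact hm n
    -- counting bound
    have hcount : ((pC.filter P).card : ℝ)
        ≤ (n.choose kk : ℝ) * ((kk.choose 2).choose q) * ((N - q).choose (m n - q)) := by
      have := aux_union_count n kk (m n) q
      rw [hboard] at this
      exact_mod_cast this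
    have hfrac : ((N - q).choose (m n - q) : ℝ) / pC.card ≤ p ^ q := by
      rw [hD]
      calc ((N - q).choose (m n - q) : ℝ) / (N.choose (m n)) ≤ ((m n:ℝ)/N)^q :=
            aux_choose_ratio hqm hmN
        _ ≤ p ^ q := by
            apply pow_le_pow_left₀ (by positivity) hmnp
    -- middle factor
    have hmid : ((kk.choose 2).choose q : ℝ) ≤ (Real.exp 1 * ((kk:ℝ) - 1)) ^ (kk/2) := by
      have hsymm : (kk.choose 2).choose q = (kk.choose 2).choose (kk/2) := by
        rw [hqval]; exact Nat.choose_symm hhalfle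
      rw [hsymm]
      have h1 := aux_choose_le (kk.choose 2) (kk/2)
      have h2 : (Real.exp 1 * ((kk.choose 2 : ℕ):ℝ) / ((kk/2 : ℕ):ℝ))
          = Real.exp 1 * ((kk:ℝ) - 1) := by
        rw [hc2, hhalf, hkk4]
        push_cast
        field_simp
        ring
      rw [h2] at h1
      exact h1
    calc ((pC.filter P).card : ℝ) / pC.card
        ≤ ((n.choose kk : ℝ) * ((kk.choose 2).choose q) * ((N - q).choose (m n - q))) / pC.card := by
          gcongr
      _ = (n.choose kk : ℝ) * ((kk.choose 2).choose q) * (((N - q).choose (m n - q) : ℝ) / pC.card) := by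
          ring
      _ ≤ (Real.exp 1 * n / kk) ^ kk * (Real.exp 1 * ((kk : ℝ) - 1)) ^ (kk / 2) * p ^ q := by
          apply mul_le_mul
          · apply mul_le_mul (aux_choose_le n kk) hmid (by positivity) (by positivity)
          · exact hfrac
          · positivity
          · positivity
  · have hc : 0 < Real.log (1/p) := Real.log_pos (by rw [lt_div_iff₀ hp0]; linarith)
    set c := Real.log (1/p) with hcdef
    -- log n / c ≥ 0 and ≤ k n
    have hL0 : ∀ n : ℕ, 0 ≤ Real.log n / c := by
      intro n
      apply div_nonneg _ hc.le
      exact Real.log_natCast_nonneg n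
    have hge : ∀ n : ℕ, Real.log n / c ≤ (k n : ℝ) := by
      intro n
      rw [hk n]
      push_cast
      calc Real.log n / c ≤ (⌈Real.log n / c⌉₊ : ℝ) := Nat.le_ceil _
        _ ≤ 4 * (⌈Real.log n / c⌉₊ : ℝ) := by
            have := Nat.cast_nonneg (α := ℝ) ⌈Real.log n / c⌉₊; linarith
    -- k n → ∞
    have hlogc : Tendsto (fun n : ℕ => Real.log n / c) atTop atTop := by
      apply Tendsto.atTop_div_const hc
      exact Real.tendsto_log_atTop.comp tendsto_natCast_atTop_atTop
    have hkR : Tendsto (fun n : ℕ => (k n : ℝ)) atTop atTop :=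
      tendsto_atTop_mono hge hlogc
    have hkt : Tendsto k atTop atTop := by
      rw [tendsto_atTop_atTop]
      intro b
      obtain ⟨i, hi⟩ := (hkR.eventually_ge_atTop (b : ℝ)).exists_forall_of_atTop
      exact ⟨i, fun n hn => by exact_mod_cast hi n hn⟩
    -- (1/2)^(k n) → 0
    have hhalf : Tendsto (fun n : ℕ => ((1:ℝ)/2) ^ (k n)) atTop (nhds 0) :=
      (tendsto_pow_atTop_nhds_zero_of_lt_one (by norm_num) (by norm_num)).comp hkt
    have hsqrt : Tendsto (fun n : ℕ => Real.sqrt (((1:ℝ)/2) ^ (k n))) atTop (nhds 0) := by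
      have h := (Real.continuous_sqrt.tendsto 0).comp hhalf
      rw [Real.sqrt_zero] at h
      exact h
    -- eventual facts
    have hev_k4 : ∀ᶠ n : ℕ in atTop, 4 ≤ k n := hkt.eventually_ge_atTop 4
    have hev_kn : ∀ᶠ n : ℕ in atTop, (k n : ℝ) ≤ n := by
      have hlog : Tendsto (fun x : ℝ => Real.log x / x) atTop (nhds 0) := by
        have := Real.tendsto_pow_log_div_mul_add_atTop 1 0 1 one_ne_zero
        simpa using this
      have h1 : ∀ᶠ x : ℝ in atTop, Real.log x / x ≤ c/8 :=
        hlog.eventually_le_const (by positivity)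
      have h2 : ∀ᶠ x : ℝ in atTop, Real.log x / x ≤ c/8 ∧ (8:ℝ) ≤ x ∧ 0 < x := by
        filter_upwards [h1, eventually_ge_atTop (8:ℝ), eventually_gt_atTop (0:ℝ)] with x a b d
        exact ⟨a, b, d⟩
      have h3 := (tendsto_natCast_atTop_atTop (R := ℝ)).eventually h2
      filter_upwards [h3] with n hn
      obtain ⟨ha, hb, hx⟩ := hn
      rw [hk n]
      push_cast
      have hceil : (⌈Real.log n / c⌉₊ : ℝ) ≤ Real.log n / c + 1 := by
        have := Nat.ceil_lt_add_one (hL0 n); linarith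
      have hlogn : Real.log n ≤ c/8 * n := by
        have : Real.log n / (n:ℝ) ≤ c/8 := ha
        calc Real.log n = Real.log n / n * n := by field_simp
          _ ≤ c/8 * n := by apply mul_le_mul_of_nonneg_right this hx.le
      calc 4 * (⌈Real.log n / c⌉₊ : ℝ) ≤ 4 * (Real.log n / c + 1) := by linarith
        _ ≤ 4 * ((c/8 * n)/c + 1) := by
            have h4 : Real.log n / c ≤ (c/8 * n)/c := by
              gcongr
            linarith
        _ = n/2 + 4 := by field_simp; ring
        _ ≤ n := by linarith
    have hev_pk : ∀ᶠ n : ℕ in atTop, p ^ (k n / 4) ≤ ((n:ℝ))⁻¹ := by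
      filter_upwards [eventually_ge_atTop 1] with n hn
      have hn0 : (0:ℝ) < n := by exact_mod_cast hn
      have ht4 : k n / 4 = ⌈Real.log n / c⌉₊ := by rw [hk n]; omega
      rw [ht4]
      have h1 : (p:ℝ) ^ (⌈Real.log n / c⌉₊ : ℕ) = p ^ ((⌈Real.log n / c⌉₊ : ℕ) : ℝ) := by
        rw [Real.rpow_natCast]
      rw [h1]
      have h2 : p ^ ((⌈Real.log n / c⌉₊ : ℕ) : ℝ) ≤ p ^ (Real.log n / c) :=
        Real.rpow_le_rpow_of_exponent_ge hp0 hp1.le (Nat.le_ceil _)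
      have h3 : p ^ (Real.log n / c) = (n:ℝ)⁻¹ := by
        rw [Real.rpow_def_of_pos hp0]
        have hcp : c = -Real.log p := by rw [hcdef, Real.log_div one_ne_zero (ne_of_gt hp0), Real.log_one]; ring
        have hlp : Real.log p ≠ 0 := by
          intro h; rw [hcp, h] at hc; simp at hc
        have : Real.log p * (Real.log n / c) = - Real.log n := by
          rw [hcp]
          field_simp
        rw [this, Real.exp_neg, Real.exp_log hn0]
      linarith
    -- eventual nonneg and squeeze bound
    have key : ∀ᶠ n : ℕ in atTop,
        0 ≤ (Real.exp 1 * n / k n) ^ (k n) * (Real.exp 1 * ((k n : ℝ) - 1)) ^ (k n / 2) *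
            p ^ ((k n).choose 2 - k n / 2) ∧
        (Real.exp 1 * n / k n) ^ (k n) * (Real.exp 1 * ((k n : ℝ) - 1)) ^ (k n / 2) *
            p ^ ((k n).choose 2 - k n / 2) ≤ Real.sqrt (((1:ℝ)/2) ^ (k n)) := by
      have hev_small : ∀ᶠ n : ℕ in atTop,
          Real.exp 1 ^ 3 / ((n:ℝ) * p^2) ≤ 1/2 := by
        have h := tendsto_natCast_atTop_atTop (R := ℝ)
        have h2 : ∀ᶠ n : ℕ in atTop, 2 * Real.exp 1 ^ 3 / p^2 ≤ (n:ℝ) ∧ (1:ℝ) ≤ n := by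
          filter_upwards [h.eventually_ge_atTop (2 * Real.exp 1 ^ 3 / p^2), h.eventually_ge_atTop 1] with n a b
          exact ⟨a, b⟩
        filter_upwards [h2] with n hn
        obtain ⟨ha, hb⟩ := hn
        have hn0 : (0:ℝ) < n := by linarith
        rw [div_le_iff₀ (by positivity)]
        rw [div_le_iff₀ (by positivity)] at ha
        nlinarith [Real.exp_pos 1, sq_nonneg p]
      filter_upwards [hev_k4, hev_kn, hev_pk, hev_small, eventually_ge_atTop 1] with n h4 hkn hpk hsmall hn1
      have hn0 : (0:ℝ) < n := by exact_mod_cast hn1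
      have hkpos : (0:ℝ) < k n := by exact_mod_cast (by omega : 0 < k n)
      have hk4R : (4:ℝ) ≤ k n := by exact_mod_cast h4
      have hexp := Real.exp_pos 1
      set A := Real.exp 1 * (n:ℝ) / (k n : ℝ) with hA
      set B := Real.exp 1 * ((k n : ℝ) - 1) with hB
      have hA0 : (0:ℝ) ≤ A := by rw [hA]; positivity
      have hB0 : (0:ℝ) ≤ B := by rw [hB]; nlinarith
      have hF0 : 0 ≤ A ^ (k n) * B ^ (k n / 2) * p ^ ((k n).choose 2 - k n / 2) := by positivity
      refine ⟨hF0, ?_⟩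
      -- nat arithmetic: k n = 4(s+1)
      obtain ⟨s, hts⟩ : ∃ s, ⌈Real.log n / c⌉₊ = s + 1 := by
        have hkn4 := hk n
        exact ⟨⌈Real.log n / c⌉₊ - 1, by omega⟩
      have hkk4 : k n = 4*s + 4 := by rw [hk n, hts]; ring
      have hc2 : (k n).choose 2 = (2*s+2)*(4*s+3) := by
        rw [Nat.choose_two_right, hkk4]
        have h1 : (4*s+4) * (4*s+4-1) = 2 * ((2*s+2)*(4*s+3)) := by
          have h0 : 4*s+4-1 = 4*s+3 := by omega
          rw [h0]; ring
        rw [h1, Nat.mul_div_cancel_left _ (by norm_num)]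
      have hhalfk : k n / 2 = 2*s+2 := by omega
      have hq2 : (k n).choose 2 - k n / 2 = (2*s+2)*(4*s+2) := by
        rw [hc2, hhalfk]
        have h1 : (2*s+2)*(4*s+3) = (2*s+2)*(4*s+2) + (2*s+2) := by ring
        omega
      have h2q : 2 * ((2*s+2)*(4*s+2)) = (k n - 2) * (k n) := by
        rw [hkk4]
        have h0 : 4*s+4-2 = 4*s+2 := by omega
        rw [h0]; ring
      have e1 : k n / 2 * 2 = k n := by omega
      have e2 : ((k n).choose 2 - k n / 2) * 2 = (k n - 2) * (k n) := by
        rw [hq2]; omega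
      have hsq : (A ^ (k n) * B ^ (k n / 2) * p ^ ((k n).choose 2 - k n / 2)) ^ 2
          = (A^2 * B * p^(k n - 2)) ^ (k n) := by
        calc (A ^ (k n) * B ^ (k n / 2) * p ^ ((k n).choose 2 - k n / 2)) ^ 2
            = (A^(k n))^2 * (B^(k n / 2))^2 * (p^((k n).choose 2 - k n / 2))^2 := by ring
          _ = A^(k n * 2) * B^(k n / 2 * 2) * p^(((k n).choose 2 - k n / 2) * 2) := by
              rw [← pow_mul, ← pow_mul, ← pow_mul]
          _ = A^(k n * 2) * B^(k n) * p^((k n - 2)*(k n)) := by rw [e1, e2]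
          _ = (A^2 * B * p^(k n - 2)) ^ (k n) := by
              have comm : ∀ (a b w : ℝ) (mm : ℕ), (a^2*b*w)^mm = a^(mm*2)*b^mm*w^mm := by
                intro a b w mm
                rw [mul_pow, mul_pow, ← pow_mul, Nat.mul_comm 2 mm]
              rw [pow_mul p (k n - 2) (k n)]
              rw [comm]
      have hbase : A^2 * B * p^(k n - 2) ≤ 1/2 := by
        have hAle : A ≤ Real.exp 1 * n := by
          rw [hA, div_le_iff₀ hkpos]
          nlinarith
        have hBle : B ≤ Real.exp 1 * k n := by
          rw [hB]; nlinarith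
        have hpk2 : p^(k n - 2) = p^(k n) / p^2 := by
          rw [eq_div_iff (by positivity), ← pow_add]
          congr 1
          omega
        have hpkn : p^(k n) ≤ ((n:ℝ)⁻¹)^4 := by
          have h5 : p^(k n) = (p^(k n / 4))^4 := by
            rw [← pow_mul]; congr 1; omega
          rw [h5]
          exact pow_le_pow_left₀ (by positivity) hpk 4
        calc A^2 * B * p^(k n - 2)
            ≤ (Real.exp 1 * n)^2 * (Real.exp 1 * k n) * (((n:ℝ)⁻¹)^4 / p^2) := by
              rw [hpk2]
              apply mul_le_mul
              · exact mul_le_mul (pow_le_pow_left₀ hA0 hAle 2) hBle hB0 (by positivity)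
              · gcongr
              · positivity
              · positivity
          _ ≤ (Real.exp 1 * n)^2 * (Real.exp 1 * n) * (((n:ℝ)⁻¹)^4 / p^2) := by
              gcongr
          _ = Real.exp 1 ^ 3 / ((n:ℝ) * p^2) := by
              have hn' : (n:ℝ) ≠ 0 := ne_of_gt hn0
              have hp' : p ≠ 0 := ne_of_gt hp0
              generalize Real.exp 1 = E
              field_simp
          _ ≤ 1/2 := hsmall
      have hbase0 : 0 ≤ A^2 * B * p^(k n - 2) := by positivity
      rw [Real.le_sqrt hF0 (by positivity), hsq]
      calc (A^2 * B * p^(k n - 2)) ^ (k n) ≤ (1/2 : ℝ) ^ (k n) :=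
            pow_le_pow_left₀ hbase0 hbase (k n)
        _ = ((1:ℝ)/2) ^ (k n) := rfl
    apply tendsto_of_tendsto_of_tendsto_of_le_of_le' tendsto_const_nhds hsqrt
    · filter_upwards [key] with n hn using hn.1
    · filter_upwards [key] with n hn using hn.2
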